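/- Let s₀ ≤ s₁ be real numbers, let θ : ℝ → ℝ be differentiable on [s₀, s₁] with θ'(s) ≤ -θ(s)²/3 for every s ∈ [s₀, s₁], and suppose θ(s₀) < 0. Then s₁ - s₀ < 3/(-θ(s₀)); that is, any solution of the differential inequality with negative initial expansion cannot be continued for a proper time interval of length 3/|θ(s₀)| or longer. -/
import Mathlib


/-- A solution of the Raychaudhuri differential inequality θ' ≤ -θ²/3 with negative
initial expansion θ(s₀) < 0 cannot be continued for a proper time of length
3/(-θ(s₀)) or longer: s₁ - s₀ < 3/(-θ(s₀)). -/
theorem finite_time_singularity (s₀ s₁ : ℝ) (h01 : s₀ ≤ s₁) (θ : ℝ → ℝ)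
    (hdiff : ∀ s ∈ Set.Icc s₀ s₁, DifferentiableAt ℝ θ s)
    (hineq : ∀ s ∈ Set.Icc s₀ s₁, deriv θ s ≤ -(θ s) ^ 2 / 3)
    (h0 : θ s₀ < 0) :
    s₁ - s₀ < 3 / (-θ s₀) := by
  have hpos : 0 < 3 / (-θ s₀) := div_pos (by norm_num) (by linarith)
  rcases eq_or_lt_of_le h01 with rfl | hlt
  · simpa using hpos
  -- θ is antitone on [s₀, s₁]
  have hmem : ∀ s ∈ Set.Icc s₀ s₁, s ∈ Set.Icc s₀ s₁ := fun s hs => hs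
  have hcont : ContinuousOn θ (Set.Icc s₀ s₁) :=
    fun s hs => (hdiff s hs).continuousAt.continuousWithinAt
  have hanti : AntitoneOn θ (Set.Icc s₀ s₁) := by
    apply antitoneOn_of_deriv_nonpos (convex_Icc s₀ s₁) hcont
    · intro s hs
      exact (hdiff s (interior_subset hs)).differentiableWithinAt
    · intro s hs
      have hs' := interior_subset hs
      have := hineq s hs'
      nlinarith [sq_nonneg (θ s)]
  have hneg : ∀ s ∈ Set.Icc s₀ s₁, θ s < 0 := fun s hs =>
    lt_of_le_of_lt (hanti (Set.left_mem_Icc.2 h01) hs hs.1) h0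
  -- g s = 3 / θ s - s is monotone on [s₀, s₁]
  set g : ℝ → ℝ := fun s => 3 / θ s - s with hg
  have hgderiv : ∀ s ∈ Set.Icc s₀ s₁,
      HasDerivAt g ((0 * θ s - 3 * deriv θ s) / (θ s) ^ 2 - 1) s := by
    intro s hs
    have hne : θ s ≠ 0 := (hneg s hs).ne
    exact ((hasDerivAt_const s (3:ℝ)).div ((hdiff s hs).hasDerivAt) hne).sub
      (hasDerivAt_id s)
  have hmono : MonotoneOn g (Set.Icc s₀ s₁) := by
    apply monotoneOn_of_deriv_nonneg (convex_Icc s₀ s₁)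
    · exact fun s hs => ((hgderiv s hs).differentiableAt).continuousAt.continuousWithinAt
    · intro s hs
      exact ((hgderiv s (interior_subset hs)).differentiableAt).differentiableWithinAt
    · intro s hs
      have hs' := interior_subset hs
      rw [(hgderiv s hs').deriv]
      have h1 := hineq s hs'
      have h2 : θ s < 0 := hneg s hs'
      have h3 : (0:ℝ) < (θ s) ^ 2 := by nlinarith
      rw [sub_nonneg, le_div_iff₀ h3]
      nlinarith
  have hG := hmono (Set.left_mem_Icc.2 h01) (Set.right_mem_Icc.2 h01) h01
  have h1neg : θ s₁ < 0 := hneg s₁ (Set.right_mem_Icc.2 h01)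
  have hq : 3 / θ s₁ < 0 := div_neg_of_pos_of_neg (by norm_num) h1neg
  have hq0 : 3 / θ s₀ < 0 := div_neg_of_pos_of_neg (by norm_num) h0
  have : 3 / (-θ s₀) = -(3 / θ s₀) := by rw [div_neg]
  rw [this]
  simp only [hg] at hG
  linarith
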